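/- Let D be a weakly connected digraph and let 𝔅 be a class of finite dibonds of D. Then the following are equivalent: (i) there is a finite edge set F ⊆ E(D) meeting every dibond in 𝔅; (ii) the maximal number of pairwise disjoint dibonds in 𝔅 is finite. Moreover, if 𝔅 is finitely corner-closed, then (i) and (ii) are also equivalent to: (iii) the maximal number of pairwise disjoint and pairwise nested dibonds in 𝔅 is finite. -/

import Mathlib

/-- A digraph with vertex type `V` and edge type `E`, allowing parallel edges. -/
structure MultiDigraph (V : Type*) (E : Type*) where
  tail : E → V
  head : E → V

namespace MultiDigraph

variable {V : Type*} {E : Type*} (D : MultiDigraph V E)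

/-- Adjacency in the underlying undirected multigraph. -/
def Adj (u v : V) : Prop :=
  ∃ e : E, (D.tail e = u ∧ D.head e = v) ∨ (D.tail e = v ∧ D.head e = u)

/-- The underlying undirected multigraph is connected. -/
def WeaklyConnected : Prop :=
  ∀ u v : V, Relation.ReflTransGen D.Adj u v

/-- `B` is the dicut of `D` whose in-shore is `X` (every edge of the cut has its
head in `X`, and no edge leaves `X`). -/
def DicutWith (X : Set V) (B : Set E) : Prop :=
  (∀ e : E, D.tail e ∈ X → D.head e ∈ X) ∧
    B = {e : E | D.tail e ∉ X ∧ D.head e ∈ X}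

/-- `B` is a dicut of `D`. -/
def IsDicut (B : Set E) : Prop :=
  ∃ X : Set V, D.DicutWith X B

/-- A dibond is a minimal non-empty dicut. -/
def IsDibond (B : Set E) : Prop :=
  D.IsDicut B ∧ B.Nonempty ∧
    ∀ B' : Set E, D.IsDicut B' → B'.Nonempty → B' ⊆ B → B' = B

/-- A dijoin meets every non-empty dicut. -/
def Dijoin (F : Set E) : Prop :=
  ∀ B : Set E, D.IsDicut B → B.Nonempty → (F ∩ B).Nonempty

/-- A finitary dijoin meets every non-empty finite dicut. -/
def FinitaryDijoin (F : Set E) : Prop :=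
  ∀ B : Set E, D.IsDicut B → B.Finite → B.Nonempty → (F ∩ B).Nonempty

/-- Two dicuts are nested if they have witnessing sides one of which is
`⊆`-comparable with a side of the other. -/
def NestedDicuts (B₁ B₂ : Set E) : Prop :=
  ∃ X₁ X₂ : Set V, D.DicutWith X₁ B₁ ∧ D.DicutWith X₂ B₂ ∧
    (X₁ ⊆ X₂ ∨ X₂ ⊆ X₁ ∨ X₁ ⊆ X₂ᶜ ∨ X₂ᶜ ⊆ X₁)

/-- An optimal pair: a set `ℬ` of pairwise disjoint finite dicuts and a finitary
dijoin `F ⊆ ⋃ ℬ` meeting each member of `ℬ` in exactly one edge. -/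
def OptimalPair (F : Set E) (ℬ : Set (Set E)) : Prop :=
  (∀ B ∈ ℬ, D.IsDicut B ∧ B.Finite) ∧
    ℬ.Pairwise Disjoint ∧
    D.FinitaryDijoin F ∧
    F ⊆ ⋃₀ ℬ ∧
    ∀ B ∈ ℬ, (F ∩ B).ncard = 1

/-- A nested optimal pair. -/
def NestedOptimalPair (F : Set E) (ℬ : Set (Set E)) : Prop :=
  D.OptimalPair F ℬ ∧ ℬ.Pairwise D.NestedDicuts

/-- The underlying multigraph contains no ray. -/
def Rayless : Prop :=
  ¬ ∃ f : ℕ → V, Function.Injective f ∧ ∀ n : ℕ, D.Adj (f n) (f (n + 1))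

/-- The (undirected) cut of `D` with side `X`: all edges with exactly one
endpoint in `X`. -/
def cutEdges (X : Set V) : Set E :=
  {e : E | (D.tail e ∈ X ∧ D.head e ∉ X) ∨ (D.tail e ∉ X ∧ D.head e ∈ X)}

/-- Any two distinct vertices are separated by a finite cut. -/
def FinitelySeparable : Prop :=
  ∀ v w : V, v ≠ w → ∃ X : Set V, (D.cutEdges X).Finite ∧ v ∈ X ∧ w ∉ X

/-- Any two distinct vertices lie on different sides of some finite dicut. -/
def FinitelyDiseparable : Prop :=
  ∀ v w : V, v ≠ w → ∃ (X : Set V) (B : Set E), D.DicutWith X B ∧ B.Finite ∧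
    ((v ∈ X ∧ w ∉ X) ∨ (v ∉ X ∧ w ∈ X))

/-- The underlying multigraph is 2-connected: it is connected and deleting any
single vertex keeps it connected. -/
def UnderlyingTwoConnected : Prop :=
  D.WeaklyConnected ∧ ∀ x u v : V, u ≠ x → v ≠ x →
    Relation.ReflTransGen (fun a b => a ≠ x ∧ b ≠ x ∧ D.Adj a b) u v

/-- `v ∼ w`: no finite dicut of `D` separates `v` and `w`. -/
def Sim (v w : V) : Prop :=
  ∀ (X : Set V) (B : Set E), D.DicutWith X B → B.Finite → (v ∈ X ↔ w ∈ X)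

/-- `W` is a witness for `v ∼ w`: it meets every finite cut separating `v`
and `w` in both directions. -/
def Witness (v w : V) (W : Set E) : Prop :=
  ∀ X : Set V, (D.cutEdges X).Finite → v ∈ X → w ∉ X →
    (∃ e ∈ W, D.tail e ∈ X ∧ D.head e ∉ X) ∧
    (∃ e ∈ W, D.tail e ∉ X ∧ D.head e ∈ X)

end MultiDigraph

namespace MultiDigraph

variable {V : Type*} {E : Type*} (D : MultiDigraph V E)

/-- `B` admits a decomposition into pairwise disjoint members of `𝔅`. -/
def DicutDecomposable (𝔅 : Set (Set E)) (B : Set E) : Prop :=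
  ∃ 𝒞 : Set (Set E), 𝒞 ⊆ 𝔅 ∧ 𝒞.Pairwise Disjoint ∧ ⋃₀ 𝒞 = B

/-- The meet of two dicuts with in-shores `X₁`, `X₂`: all edges with head in
`X₁ ∩ X₂` and tail outside `X₁ ∩ X₂`. -/
def meetDicut (X₁ X₂ : Set V) : Set E :=
  {e : E | D.tail e ∉ X₁ ∩ X₂ ∧ D.head e ∈ X₁ ∩ X₂}

/-- The join of two dicuts with in-shores `X₁`, `X₂`: all edges with head in
`X₁ ∪ X₂` and tail outside `X₁ ∪ X₂`. -/
def joinDicut (X₁ X₂ : Set V) : Set E :=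
  {e : E | D.tail e ∉ X₁ ∪ X₂ ∧ D.head e ∈ X₁ ∪ X₂}

/-- `𝔅` is finitely corner-closed: for any two members both their meet and
their join admit a decomposition into members of `𝔅`. -/
def FinitelyCornerClosed (𝔅 : Set (Set E)) : Prop :=
  ∀ B₁ ∈ 𝔅, ∀ B₂ ∈ 𝔅, ∀ X₁ X₂ : Set V,
    D.DicutWith X₁ B₁ → D.DicutWith X₂ B₂ →
      DicutDecomposable 𝔅 (D.meetDicut X₁ X₂) ∧
      DicutDecomposable 𝔅 (D.joinDicut X₁ X₂)

end MultiDigraph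


section Auxiliary

open Classical in
/-- choice-based injection: a pairwise disjoint family each member of which meets
a finite set `F` is finite with at most `F.ncard` members. -/
lemma inj_choice_lemma {α : Type*} {𝒞 : Set (Set α)} {F : Set α} (hF : F.Finite)
    (h : ∀ C ∈ 𝒞, (F ∩ C).Nonempty) (hdisj : 𝒞.Pairwise Disjoint) :
    𝒞.Finite ∧ 𝒞.ncard ≤ F.ncard := by
  classical
  set g : Set α → Option α := fun C => if h : (F ∩ C).Nonempty then some h.choose else none with hg
  have hmem : ∀ C ∈ 𝒞, ∃ x, g C = some x ∧ x ∈ F ∧ x ∈ C := by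
    intro C hC
    have hne := h C hC
    refine ⟨hne.choose, ?_, hne.choose_spec.1, hne.choose_spec.2⟩
    simp [hg, hne]
  have hinj : Set.InjOn g 𝒞 := by
    intro C hC C' hC' heq
    obtain ⟨x, hx, hxF, hxC⟩ := hmem C hC
    obtain ⟨x', hx', hxF', hxC'⟩ := hmem C' hC'
    by_contra hne
    have hd := hdisj hC hC' hne
    have : x = x' := by rw [hx, hx'] at heq; exact Option.some_injective _ heq
    exact (hd.le_bot ⟨hxC, this ▸ hxC'⟩ : x ∈ (∅ : Set α))
  have himg : g '' 𝒞 ⊆ some '' F := by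
    rintro _ ⟨C, hC, rfl⟩
    obtain ⟨x, hx, hxF, _⟩ := hmem C hC
    exact ⟨x, hxF, hx.symm⟩
  have hfinimg : (g '' 𝒞).Finite := (hF.image some).subset himg
  refine ⟨Set.Finite.of_finite_image hfinimg hinj, ?_⟩
  calc 𝒞.ncard = (g '' 𝒞).ncard := (Set.ncard_image_of_injOn hinj).symm
    _ ≤ (some '' F).ncard := Set.ncard_le_ncard himg (hF.image some)
    _ = F.ncard := Set.ncard_image_of_injective _ (Option.some_injective _)

/-- a pairwise disjoint family of nonempty subsets of a finite set is finite and small. -/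
lemma family_finite_card {α : Type*} {U : Set α} (hU : U.Finite) {𝒞 : Set (Set α)}
    (hsub : ∀ C ∈ 𝒞, C ⊆ U) (hne : ∀ C ∈ 𝒞, C.Nonempty) (hdisj : 𝒞.Pairwise Disjoint) :
    𝒞.Finite ∧ 𝒞.ncard ≤ U.ncard :=
  inj_choice_lemma hU (fun C hC => by
    obtain ⟨x, hx⟩ := hne C hC
    exact ⟨x, hsub C hC hx, hx⟩) hdisj

/-- arithmetic core of the uncrossing potential argument. -/
lemma sq_uncross_ineq {α : Type*} {T a b : Set α} (hT : T.Finite) (ha : a ⊆ T) (hb : b ⊆ T)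
    (hab : ¬ a ⊆ b) (hba : ¬ b ⊆ a) :
    a.ncard ^ 2 + b.ncard ^ 2 + 1 ≤ (a ∩ b).ncard ^ 2 + (a ∪ b).ncard ^ 2 := by
  have hfa : a.Finite := hT.subset ha
  have hfb : b.Finite := hT.subset hb
  obtain ⟨x, hxa, hxb⟩ := Set.not_subset.mp hab
  obtain ⟨y, hyb, hya⟩ := Set.not_subset.mp hba
  have hsum : (a ∪ b).ncard + (a ∩ b).ncard = a.ncard + b.ncard :=
    Set.ncard_union_add_ncard_inter a b hfa hfb
  have h1 : a.ncard + 1 ≤ (a ∪ b).ncard := by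
    have : insert y a ⊆ a ∪ b := Set.insert_subset (Or.inr hyb) Set.subset_union_left
    calc a.ncard + 1 = (insert y a).ncard := (Set.ncard_insert_of_notMem hya hfa).symm
      _ ≤ (a ∪ b).ncard := Set.ncard_le_ncard this (hfa.union hfb)
  have h2 : b.ncard + 1 ≤ (a ∪ b).ncard := by
    have : insert x b ⊆ a ∪ b := Set.insert_subset (Or.inl hxa) Set.subset_union_right
    calc b.ncard + 1 = (insert x b).ncard := (Set.ncard_insert_of_notMem hxb hfb).symm
      _ ≤ (a ∪ b).ncard := Set.ncard_le_ncard this (hfa.union hfb)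
  nlinarith [hsum, h1, h2, Nat.zero_le ((a ∩ b).ncard)]

end Auxiliary

namespace MultiDigraph

variable {V : Type*} {E : Type*} {D : MultiDigraph V E}

lemma exists_boundary {S : Set V} {v w : V} (hvw : Relation.ReflTransGen D.Adj v w)
    (hv : v ∈ S) (hw : w ∉ S) : ∃ a b, a ∈ S ∧ b ∉ S ∧ D.Adj a b := by
  induction hvw using Relation.ReflTransGen.head_induction_on with
  | refl => exact absurd hv hw
  | head hadj _ ih =>
    rename_i a c _
    by_cases hc : c ∈ S
    · exact ih hc
    · exact ⟨a, c, hv, hc, hadj⟩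

/-- key lemma: traces on a vertex set containing all endpoints of both cuts
determine inclusion of shores, in a weakly connected digraph. -/
lemma trace_mono (hD : D.WeaklyConnected) {B₁ B₂ : Set E} {X₁ X₂ : Set V}
    (h₁ : D.DicutWith X₁ B₁) (h₂ : D.DicutWith X₂ B₂) (hB₂ : B₂.Nonempty)
    {T : Set V} (hT : ∀ e, e ∈ B₁ ∪ B₂ → D.tail e ∈ T ∧ D.head e ∈ T)
    (hsub : X₁ ∩ T ⊆ X₂ ∩ T) : X₁ ⊆ X₂ := by
  intro v hv
  by_contra hvX₂
  obtain ⟨e₂, he₂⟩ := hB₂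
  have he₂' : D.tail e₂ ∉ X₂ ∧ D.head e₂ ∈ X₂ := by rw [h₂.2] at he₂; exact he₂
  have hw : D.head e₂ ∉ X₁ ∩ X₂ᶜ := fun h => h.2 he₂'.2
  obtain ⟨a, b, haS, hbS, e, hor⟩ :=
    exists_boundary (S := X₁ ∩ X₂ᶜ) (hD v (D.head e₂)) ⟨hv, hvX₂⟩ hw
  have haT : a ∈ X₂ := by
    have haX₁ : a ∈ X₁ := haS.1
    have haX₂ : a ∉ X₂ := haS.2
    have key : a ∈ T := by
      by_cases hbX₁ : b ∈ X₁
      · have hbX₂ : b ∈ X₂ := by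
          by_contra hb; exact hbS ⟨hbX₁, hb⟩
        rcases hor with ⟨hta, hhb⟩ | ⟨htb, hha⟩
        · have : e ∈ B₂ := by rw [h₂.2]; exact ⟨hta ▸ haX₂, hhb ▸ hbX₂⟩
          exact hta ▸ (hT e (Or.inr this)).1
        · exact absurd (h₂.1 e (htb ▸ hbX₂)) (hha ▸ haX₂)
      · rcases hor with ⟨hta, hhb⟩ | ⟨htb, hha⟩
        · exact absurd (h₁.1 e (hta ▸ haX₁)) (hhb ▸ hbX₁)
        · have : e ∈ B₁ := by rw [h₁.2]; exact ⟨htb ▸ hbX₁, hha ▸ haX₁⟩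
          exact hha ▸ (hT e (Or.inl this)).2
    exact (hsub ⟨haX₁, key⟩).1
  exact haS.2 haT

/-- a closed set with no incoming edges is trivial in a weakly connected digraph. -/
lemma closed_no_in (hD : D.WeaklyConnected) {X : Set V}
    (hcl : ∀ e, D.tail e ∈ X → D.head e ∈ X)
    (hin : ∀ e : E, ¬(D.tail e ∉ X ∧ D.head e ∈ X)) : X = ∅ ∨ X = Set.univ := by
  by_cases hne : X.Nonempty
  · right
    obtain ⟨v, hv⟩ := hne
    ext w
    simp only [Set.mem_univ, iff_true]
    by_contra hw
    obtain ⟨a, b, haS, hbS, e, hor⟩ := exists_boundary (S := X) (hD v w) hv hw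
    rcases hor with ⟨hta, hhb⟩ | ⟨htb, hha⟩
    · exact hbS (hhb ▸ hcl e (hta ▸ haS))
    · exact hin e ⟨htb ▸ hbS, hha ▸ haS⟩
  · exact Or.inl (Set.not_nonempty_iff_eq_empty.mp hne)

lemma meet_dicutWith {X₁ X₂ : Set V} {B₁ B₂ : Set E}
    (h₁ : D.DicutWith X₁ B₁) (h₂ : D.DicutWith X₂ B₂) :
    D.DicutWith (X₁ ∩ X₂) (D.meetDicut X₁ X₂) :=
  ⟨fun e he => ⟨h₁.1 e he.1, h₂.1 e he.2⟩, rfl⟩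

lemma join_dicutWith {X₁ X₂ : Set V} {B₁ B₂ : Set E}
    (h₁ : D.DicutWith X₁ B₁) (h₂ : D.DicutWith X₂ B₂) :
    D.DicutWith (X₁ ∪ X₂) (D.joinDicut X₁ X₂) := by
  refine ⟨fun e he => ?_, rfl⟩
  rcases he with h | h
  · exact Or.inl (h₁.1 e h)
  · exact Or.inr (h₂.1 e h)

lemma corner_union {X₁ X₂ : Set V} {B₁ B₂ : Set E}
    (h₁ : D.DicutWith X₁ B₁) (h₂ : D.DicutWith X₂ B₂) :
    D.meetDicut X₁ X₂ ∪ D.joinDicut X₁ X₂ = B₁ ∪ B₂ := by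
  ext e
  simp only [meetDicut, joinDicut, Set.mem_union, Set.mem_setOf_eq, h₁.2, h₂.2,
    Set.mem_inter_iff, Set.mem_setOf_eq]
  constructor
  · rintro (⟨ht, hh⟩ | ⟨ht, hh⟩)
    · by_cases h : D.tail e ∈ X₁
      · exact Or.inr ⟨fun hc => ht ⟨h, hc⟩, hh.2⟩
      · exact Or.inl ⟨h, hh.1⟩
    · rcases hh with h | h
      · exact Or.inl ⟨fun hc => ht (Or.inl hc), h⟩
      · exact Or.inr ⟨fun hc => ht (Or.inr hc), h⟩
  · rintro (⟨ht, hh⟩ | ⟨ht, hh⟩)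
    · by_cases h : D.tail e ∈ X₂
      · exact Or.inl ⟨fun hc => ht hc.1, ⟨hh, h₂.1 e h⟩⟩
      · exact Or.inr ⟨fun hc => hc.elim ht h, Or.inl hh⟩
    · by_cases h : D.tail e ∈ X₁
      · exact Or.inl ⟨fun hc => ht hc.2, ⟨h₁.1 e h, hh⟩⟩
      · exact Or.inr ⟨fun hc => hc.elim h ht, Or.inr hh⟩

lemma corner_disjoint {X₁ X₂ : Set V} {B₁ B₂ : Set E}
    (h₁ : D.DicutWith X₁ B₁) (h₂ : D.DicutWith X₂ B₂) (hd : Disjoint B₁ B₂) :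
    Disjoint (D.meetDicut X₁ X₂) (D.joinDicut X₁ X₂) := by
  rw [Set.disjoint_left]
  rintro e ⟨ht, hh⟩ ⟨ht', hh'⟩
  have he₁ : e ∈ B₁ := by rw [h₁.2]; exact ⟨fun hc => ht' (Or.inl hc), hh.1⟩
  have he₂ : e ∈ B₂ := by rw [h₂.2]; exact ⟨fun hc => ht' (Or.inr hc), hh.2⟩
  exact (hd.le_bot ⟨he₁, he₂⟩ : e ∈ (∅ : Set E))

end MultiDigraph


open Classical in
lemma MultiDigraph.uncross {V E : Type*} {D : MultiDigraph V E} (hD : D.WeaklyConnected)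
    {𝔅 : Set (Set E)} (h𝔅 : ∀ B ∈ 𝔅, D.IsDibond B ∧ B.Finite)
    (hCC : D.FinitelyCornerClosed 𝔅)
    {ℬ₀ : Set (Set E)} (hsub₀ : ℬ₀ ⊆ 𝔅) (hfin₀ : ℬ₀.Finite)
    (hdisj₀ : ℬ₀.Pairwise Disjoint) :
    ∃ ℬ₁ : Set (Set E), ℬ₁ ⊆ 𝔅 ∧ ℬ₁.Finite ∧ ℬ₁.Pairwise Disjoint ∧
      ℬ₁.Pairwise D.NestedDicuts ∧ ℬ₀.ncard ≤ ℬ₁.ncard := by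
  classical
  set U : Set E := ⋃₀ ℬ₀ with hUdef
  have hU : U.Finite := Set.Finite.sUnion hfin₀ (fun B hB => (h𝔅 B (hsub₀ hB)).2)
  set T : Set V := D.tail '' U ∪ D.head '' U with hTdef
  have hT : T.Finite := (hU.image _).union (hU.image _)
  have hTend : ∀ e ∈ U, D.tail e ∈ T ∧ D.head e ∈ T := fun e he =>
    ⟨Or.inl ⟨e, he, rfl⟩, Or.inr ⟨e, he, rfl⟩⟩
  set K : ℕ := (U.ncard + 2) * (T.ncard ^ 2 + 1) with hKdef
  have hK2 : 2 * T.ncard ^ 2 ≤ K := by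
    show 2 * T.ncard ^ 2 ≤ (U.ncard + 2) * (T.ncard ^ 2 + 1)
    nlinarith [Nat.zero_le (U.ncard), Nat.zero_le (T.ncard ^ 2)]
  have hKU : U.ncard * T.ncard ^ 2 ≤ K := by
    show U.ncard * T.ncard ^ 2 ≤ (U.ncard + 2) * (T.ncard ^ 2 + 1)
    nlinarith [Nat.zero_le (U.ncard), Nat.zero_le (T.ncard ^ 2)]
  set N : ℕ := U.ncard * (K + 1) + K with hNdef
  have shoreEx : ∀ B ∈ 𝔅, D.IsDicut B := fun B hB => (h𝔅 B hB).1.1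
  set shore : Set E → Set V := fun B => if h : D.IsDicut B then h.choose else ∅ with hshoredef
  have shore_spec : ∀ B, D.IsDicut B → D.DicutWith (shore B) B := by
    intro B hB
    simp only [hshoredef, dif_pos hB]
    exact hB.choose_spec
  set φ : Finset (Set E) → (Set E → Set V) → ℕ :=
    fun ℬ σ => ℬ.card * (K + 1) + ∑ B ∈ ℬ, (σ B ∩ T).ncard ^ 2 with hφdef
  set Inv : Finset (Set E) → (Set E → Set V) → Prop :=
    fun ℬ σ => (↑ℬ : Set (Set E)) ⊆ 𝔅 ∧ (↑ℬ : Set (Set E)).Pairwise Disjoint ∧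
      (∀ B ∈ ℬ, B ⊆ U) ∧ (∀ B ∈ ℬ, D.DicutWith (σ B) B) with hInvdef
  have hφbound : ∀ ℬ σ, Inv ℬ σ → φ ℬ σ ≤ N := by
    rintro ℬ σ ⟨h1, h2, h3, h4⟩
    have hcard : ℬ.card ≤ U.ncard := by
      have := (family_finite_card hU (𝒞 := (↑ℬ : Set (Set E))) (fun C hC => h3 C hC)
        (fun C hC => (h𝔅 C (h1 hC)).1.2.1) h2).2
      simpa [Set.ncard_coe_finset] using this
    have hsum : ∑ B ∈ ℬ, (σ B ∩ T).ncard ^ 2 ≤ ℬ.card * T.ncard ^ 2 := by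
      have := Finset.sum_le_card_nsmul ℬ (fun B => (σ B ∩ T).ncard ^ 2) (T.ncard ^ 2)
        (fun x _ => Nat.pow_le_pow_left (Set.ncard_le_ncard Set.inter_subset_right hT) 2)
      simpa using this
    have h5 : ℬ.card * T.ncard ^ 2 ≤ U.ncard * T.ncard ^ 2 := Nat.mul_le_mul_right _ hcard
    have h6 : ℬ.card * (K + 1) ≤ U.ncard * (K + 1) := Nat.mul_le_mul_right _ hcard
    simp only [hφdef, hNdef]
    omega
  -- the uncrossing step
  have step : ∀ ℬ σ, Inv ℬ σ →
      ¬ (∀ B₁ ∈ ℬ, ∀ B₂ ∈ ℬ, B₁ ≠ B₂ →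
        (σ B₁ ⊆ σ B₂ ∨ σ B₂ ⊆ σ B₁ ∨ σ B₁ ⊆ (σ B₂)ᶜ ∨ (σ B₂)ᶜ ⊆ σ B₁)) →
      ∃ ℬ' σ', Inv ℬ' σ' ∧ ℬ.card ≤ ℬ'.card ∧ φ ℬ σ + 1 ≤ φ ℬ' σ' := by
    intro ℬ σ hInv hcross
    obtain ⟨h1, h2, h3, h4⟩ := hInv
    push_neg at hcross
    obtain ⟨B₁, hB₁, B₂, hB₂, hne, hn12, hn21, hn1c, hnc1⟩ := hcross
    set X₁ := σ B₁ with hX₁def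
    set X₂ := σ B₂ with hX₂def
    have hd₁ : D.DicutWith X₁ B₁ := h4 B₁ hB₁
    have hd₂ : D.DicutWith X₂ B₂ := h4 B₂ hB₂
    have hB₁𝔅 : B₁ ∈ 𝔅 := h1 (Finset.mem_coe.mpr hB₁)
    have hB₂𝔅 : B₂ ∈ 𝔅 := h1 (Finset.mem_coe.mpr hB₂)
    have hB₁ne : B₁.Nonempty := (h𝔅 B₁ hB₁𝔅).1.2.1
    have hB₂ne : B₂.Nonempty := (h𝔅 B₂ hB₂𝔅).1.2.1
    have hdisj12 : Disjoint B₁ B₂ := h2 (Finset.mem_coe.mpr hB₁) (Finset.mem_coe.mpr hB₂) hne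
    set M := D.meetDicut X₁ X₂ with hMdef
    set J := D.joinDicut X₁ X₂ with hJdef
    have hMd : D.DicutWith (X₁ ∩ X₂) M := MultiDigraph.meet_dicutWith hd₁ hd₂
    have hJd : D.DicutWith (X₁ ∪ X₂) J := MultiDigraph.join_dicutWith hd₁ hd₂
    have hMJu : M ∪ J = B₁ ∪ B₂ := MultiDigraph.corner_union hd₁ hd₂
    have hMJd : Disjoint M J := MultiDigraph.corner_disjoint hd₁ hd₂ hdisj12
    have hBU : B₁ ∪ B₂ ⊆ U := Set.union_subset (h3 B₁ hB₁) (h3 B₂ hB₂)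
    have hMne : M.Nonempty := by
      rw [Set.nonempty_iff_ne_empty]
      intro hM
      have hin : ∀ e : E, ¬(D.tail e ∉ X₁ ∩ X₂ ∧ D.head e ∈ X₁ ∩ X₂) := by
        intro e he
        have : e ∈ M := he
        rw [hM] at this
        exact this
      rcases MultiDigraph.closed_no_in hD hMd.1 hin with h | h
      · refine hn1c ?_
        intro x hx hx2
        have : x ∈ X₁ ∩ X₂ := ⟨hx, hx2⟩
        rw [h] at this
        exact this
      · obtain ⟨e, he⟩ := hB₁ne
        rw [hd₁.2] at he
        exact he.1 (by
          have : D.tail e ∈ X₁ ∩ X₂ := by rw [h]; trivial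
          exact this.1)
    have hJne : J.Nonempty := by
      rw [Set.nonempty_iff_ne_empty]
      intro hJ
      have hin : ∀ e : E, ¬(D.tail e ∉ X₁ ∪ X₂ ∧ D.head e ∈ X₁ ∪ X₂) := by
        intro e he
        have : e ∈ J := he
        rw [hJ] at this
        exact this
      rcases MultiDigraph.closed_no_in hD hJd.1 hin with h | h
      · obtain ⟨e, he⟩ := hB₁ne
        rw [hd₁.2] at he
        have : D.head e ∈ X₁ ∪ X₂ := Or.inl he.2
        rw [h] at this
        exact this
      · refine hnc1 ?_
        intro x hx
        have : x ∈ X₁ ∪ X₂ := by rw [h]; trivial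
        rcases this with h' | h'
        · exact h'
        · exact absurd h' hx
    obtain ⟨hMdec, hJdec⟩ := hCC B₁ hB₁𝔅 B₂ hB₂𝔅 X₁ X₂ hd₁ hd₂
    obtain ⟨𝒟₁, h𝒟₁sub, h𝒟₁disj, h𝒟₁un⟩ := hMdec
    obtain ⟨𝒟₂, h𝒟₂sub, h𝒟₂disj, h𝒟₂un⟩ := hJdec
    rw [← hMdef] at h𝒟₁un
    rw [← hJdef] at h𝒟₂un
    have h𝒟₁ne' : ∀ C ∈ 𝒟₁, C.Nonempty := fun C hC => (h𝔅 C (h𝒟₁sub hC)).1.2.1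
    have h𝒟₂ne' : ∀ C ∈ 𝒟₂, C.Nonempty := fun C hC => (h𝔅 C (h𝒟₂sub hC)).1.2.1
    have h𝒟₁mem : ∀ C ∈ 𝒟₁, C ⊆ M := fun C hC => h𝒟₁un ▸ Set.subset_sUnion_of_mem hC
    have h𝒟₂mem : ∀ C ∈ 𝒟₂, C ⊆ J := fun C hC => h𝒟₂un ▸ Set.subset_sUnion_of_mem hC
    have hMU : M ⊆ U := (Set.subset_union_left.trans hMJu.subset).trans hBU
    have hJU : J ⊆ U := (Set.subset_union_right.trans hMJu.subset).trans hBU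
    have h𝒟memB : ∀ C ∈ 𝒟₁ ∪ 𝒟₂, C ⊆ B₁ ∪ B₂ := by
      rintro C (hC | hC)
      · exact (h𝒟₁mem C hC).trans (Set.subset_union_left.trans hMJu.subset)
      · exact (h𝒟₂mem C hC).trans (Set.subset_union_right.trans hMJu.subset)
    have h𝒟disj : (𝒟₁ ∪ 𝒟₂).Pairwise Disjoint := by
      rintro C (hC | hC) C' (hC' | hC') hne'
      · exact h𝒟₁disj hC hC' hne'
      · exact (hMJd.mono (h𝒟₁mem C hC) (h𝒟₂mem C' hC'))
      · exact (hMJd.mono (h𝒟₁mem C' hC') (h𝒟₂mem C hC)).symm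
      · exact h𝒟₂disj hC hC' hne'
    have h𝒟fin₁ : 𝒟₁.Finite :=
      (family_finite_card hU (fun C hC => (h𝒟₁mem C hC).trans hMU) h𝒟₁ne' h𝒟₁disj).1
    have h𝒟fin₂ : 𝒟₂.Finite :=
      (family_finite_card hU (fun C hC => (h𝒟₂mem C hC).trans hJU) h𝒟₂ne' h𝒟₂disj).1
    have h𝒟fin' : (𝒟₁ ∪ 𝒟₂).Finite := h𝒟fin₁.union h𝒟fin₂
    have h𝒟₁nonempty : 𝒟₁.Nonempty := by
      rw [Set.nonempty_iff_ne_empty]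
      rintro rfl
      simp only [Set.sUnion_empty] at h𝒟₁un
      exact hMne.ne_empty h𝒟₁un.symm
    have h𝒟₂nonempty : 𝒟₂.Nonempty := by
      rw [Set.nonempty_iff_ne_empty]
      rintro rfl
      simp only [Set.sUnion_empty] at h𝒟₂un
      exact hJne.ne_empty h𝒟₂un.symm
    have h𝒟₁𝒟₂ : Disjoint 𝒟₁ 𝒟₂ := by
      rw [Set.disjoint_left]
      intro C hC1 hC2
      obtain ⟨x, hx⟩ := h𝒟₁ne' C hC1
      exact (hMJd.le_bot ⟨h𝒟₁mem C hC1 hx, h𝒟₂mem C hC2 hx⟩ : x ∈ (∅ : Set E))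
    obtain ⟨C₁, hC₁⟩ := h𝒟₁nonempty
    obtain ⟨C₂, hC₂⟩ := h𝒟₂nonempty
    have hC₁₂ne : C₁ ≠ C₂ := by
      rintro rfl
      exact (Set.disjoint_left.mp h𝒟₁𝒟₂) hC₁ hC₂
    set 𝒟fin : Finset (Set E) := h𝒟fin'.toFinset with h𝒟findef
    have h𝒟coe : (↑𝒟fin : Set (Set E)) = 𝒟₁ ∪ 𝒟₂ := h𝒟fin'.coe_toFinset
    have h𝒟card2 : 2 ≤ 𝒟fin.card := by
      have hsubset : ({C₁, C₂} : Finset (Set E)) ⊆ 𝒟fin := by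
        intro x hx
        simp only [Finset.mem_insert, Finset.mem_singleton] at hx
        rw [← Finset.mem_coe, h𝒟coe]
        rcases hx with rfl | rfl
        · exact Or.inl hC₁
        · exact Or.inr hC₂
      calc 2 = ({C₁, C₂} : Finset (Set E)).card := by
            rw [Finset.card_insert_of_notMem (by simpa using hC₁₂ne), Finset.card_singleton]
        _ ≤ 𝒟fin.card := Finset.card_le_card hsubset
    set P : Finset (Set E) := (ℬ.erase B₁).erase B₂ with hPdef
    have hPmem : ∀ C ∈ P, C ∈ ℬ ∧ C ≠ B₁ ∧ C ≠ B₂ := by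
      intro C hC
      simp only [hPdef, Finset.mem_erase] at hC
      exact ⟨hC.2.2, hC.2.1, hC.1⟩
    have hPD : ∀ C ∈ P, ∀ Cd ∈ 𝒟₁ ∪ 𝒟₂, Disjoint C Cd ∧ C ≠ Cd := by
      intro C hC Cd hCd
      obtain ⟨hCℬ, hC1, hC2⟩ := hPmem C hC
      have hdC1 : Disjoint C B₁ := h2 (Finset.mem_coe.mpr hCℬ) (Finset.mem_coe.mpr hB₁) hC1
      have hdC2 : Disjoint C B₂ := h2 (Finset.mem_coe.mpr hCℬ) (Finset.mem_coe.mpr hB₂) hC2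
      have hdis : Disjoint C Cd := (hdC1.union_right hdC2).mono_right (h𝒟memB Cd hCd)
      refine ⟨hdis, ?_⟩
      rintro rfl
      obtain ⟨x, hx⟩ : C.Nonempty := by
        rcases hCd with h | h
        exacts [h𝒟₁ne' C h, h𝒟₂ne' C h]
      exact (hdis.le_bot ⟨hx, hx⟩ : x ∈ (∅ : Set E))
    have hPDfin : Disjoint P 𝒟fin := by
      rw [Finset.disjoint_left]
      intro C hC hC'
      have hC'' : C ∈ 𝒟₁ ∪ 𝒟₂ := by rw [← h𝒟coe]; exact Finset.mem_coe.mpr hC'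
      exact (hPD C hC C hC'').2 rfl
    have hB₂P : B₂ ∈ ℬ.erase B₁ := Finset.mem_erase.mpr ⟨fun h => hne h.symm, hB₂⟩
    have hcardℬ : ℬ.card = P.card + 2 := by
      have e1 := Finset.card_erase_add_one hB₁
      have e2 := Finset.card_erase_add_one hB₂P
      simp only [hPdef]
      omega
    have hsumℬ : ∑ B ∈ ℬ, (σ B ∩ T).ncard ^ 2 =
        (X₁ ∩ T).ncard ^ 2 + (X₂ ∩ T).ncard ^ 2 + ∑ B ∈ P, (σ B ∩ T).ncard ^ 2 := by
      rw [← Finset.add_sum_erase _ _ hB₁, ← Finset.add_sum_erase _ _ hB₂P]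
      simp only [hPdef, ← hX₁def, ← hX₂def]
      ring
    have hfb : (X₁ ∩ T).ncard ^ 2 + (X₂ ∩ T).ncard ^ 2 ≤ K := by
      have hh1 : (X₁ ∩ T).ncard ^ 2 ≤ T.ncard ^ 2 :=
        Nat.pow_le_pow_left (Set.ncard_le_ncard Set.inter_subset_right hT) 2
      have hh2 : (X₂ ∩ T).ncard ^ 2 ≤ T.ncard ^ 2 :=
        Nat.pow_le_pow_left (Set.ncard_le_ncard Set.inter_subset_right hT) 2
      omega
    set ℬ' : Finset (Set E) := P ∪ 𝒟fin with hℬ'def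
    have hcardℬ' : ℬ'.card = P.card + 𝒟fin.card := by
      rw [hℬ'def, Finset.card_union_of_disjoint hPDfin]
    have hℬ'sub : (↑ℬ' : Set (Set E)) ⊆ 𝔅 := by
      intro C hC
      rw [hℬ'def, Finset.coe_union, Set.mem_union] at hC
      rcases hC with hC | hC
      · exact h1 (Finset.mem_coe.mpr ((Finset.erase_subset _ _) ((Finset.erase_subset _ _) (Finset.mem_coe.mp hC))))
      · have : C ∈ 𝒟₁ ∪ 𝒟₂ := by rw [← h𝒟coe]; exact hC
        rcases this with h | h
        exacts [h𝒟₁sub h, h𝒟₂sub h]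
    have hℬ'disj : (↑ℬ' : Set (Set E)).Pairwise Disjoint := by
      intro C hC C' hC' hne'
      rw [hℬ'def, Finset.coe_union, Set.mem_union] at hC hC'
      have hmemP : ∀ {X : Set E}, X ∈ (↑P : Set (Set E)) → X ∈ ℬ ∧ X ≠ B₁ ∧ X ≠ B₂ :=
        fun hX => hPmem _ (Finset.mem_coe.mp hX)
      rcases hC with hC | hC <;> rcases hC' with hC' | hC'
      · exact h2 (Finset.mem_coe.mpr (hmemP hC).1) (Finset.mem_coe.mpr (hmemP hC').1) hne'
      · exact (hPD C (Finset.mem_coe.mp hC) C' (by rw [← h𝒟coe]; exact hC')).1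
      · exact ((hPD C' (Finset.mem_coe.mp hC') C (by rw [← h𝒟coe]; exact hC)).1).symm
      · exact h𝒟disj (by rw [← h𝒟coe]; exact hC) (by rw [← h𝒟coe]; exact hC') hne'
    have hℬ'U : ∀ B ∈ ℬ', B ⊆ U := by
      intro C hC
      rw [hℬ'def, Finset.mem_union] at hC
      rcases hC with hC | hC
      · exact h3 C (hPmem C hC).1
      · have : C ∈ 𝒟₁ ∪ 𝒟₂ := by rw [← h𝒟coe]; exact Finset.mem_coe.mpr hC
        exact (h𝒟memB C this).trans hBU
    have hsumP : ∀ τ : Set E → Set V, (∀ B ∈ P, τ B = σ B) →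
        ∑ B ∈ P, (τ B ∩ T).ncard ^ 2 = ∑ B ∈ P, (σ B ∩ T).ncard ^ 2 :=
      fun τ hτ => Finset.sum_congr rfl (fun B hB => by rw [hτ B hB])
    by_cases hbig : 3 ≤ 𝒟fin.card
    · -- case A: at least three parts, cardinality increases
      set σ' : Set E → Set V := fun C => if C ∈ 𝒟₁ ∪ 𝒟₂ then shore C else σ C with hσ'def
      have hσ'P : ∀ B ∈ P, σ' B = σ B := by
        intro B hB
        have hnB : B ∉ 𝒟₁ ∪ 𝒟₂ := fun h => (hPD B hB B h).2 rfl
        show (if B ∈ 𝒟₁ ∪ 𝒟₂ then shore B else σ B) = σ B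
        exact if_neg hnB
      have hInv' : Inv ℬ' σ' := by
        refine ⟨hℬ'sub, hℬ'disj, hℬ'U, ?_⟩
        intro C hC
        rw [hℬ'def, Finset.mem_union] at hC
        rcases hC with hC | hC
        · rw [hσ'P C hC]; exact h4 C (hPmem C hC).1
        · have hCd : C ∈ 𝒟₁ ∪ 𝒟₂ := by rw [← h𝒟coe]; exact Finset.mem_coe.mpr hC
          have hCs : σ' C = shore C := if_pos hCd
          rw [hCs]
          refine shore_spec C (shoreEx C ?_)
          rcases hCd with h | h
          exacts [h𝒟₁sub h, h𝒟₂sub h]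
      refine ⟨ℬ', σ', hInv', ?_, ?_⟩
      · omega
      · have hsum' : ∑ B ∈ ℬ', (σ' B ∩ T).ncard ^ 2 =
            ∑ B ∈ P, (σ B ∩ T).ncard ^ 2 + ∑ B ∈ 𝒟fin, (σ' B ∩ T).ncard ^ 2 := by
          rw [hℬ'def, Finset.sum_union hPDfin, hsumP σ' hσ'P]
        have hccard : P.card + 3 ≤ ℬ'.card := by omega
        have h6 : (P.card + 3) * (K + 1) ≤ ℬ'.card * (K + 1) := Nat.mul_le_mul_right _ hccard
        simp only [hφdef]
        rw [hsumℬ, hsum', hcardℬ]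
        nlinarith [Nat.zero_le (∑ B ∈ 𝒟fin, (σ' B ∩ T).ncard ^ 2)]
    · -- case B: exactly two parts, the meet and the join themselves
      have h𝒟card : 𝒟fin.card = 2 := by omega
      have hncardU : 𝒟₁.ncard + 𝒟₂.ncard = 2 := by
        have h7 : (𝒟₁ ∪ 𝒟₂).ncard = 2 := by
          rw [← h𝒟coe, Set.ncard_coe_finset, h𝒟card]
        rw [← Set.ncard_union_eq h𝒟₁𝒟₂ h𝒟fin₁ h𝒟fin₂, h7]
      have h𝒟₁pos : 0 < 𝒟₁.ncard := (Set.ncard_pos h𝒟fin₁).mpr ⟨C₁, hC₁⟩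
      have h𝒟₂pos : 0 < 𝒟₂.ncard := (Set.ncard_pos h𝒟fin₂).mpr ⟨C₂, hC₂⟩
      have h𝒟₁card : 𝒟₁.ncard = 1 := by omega
      have h𝒟₂card : 𝒟₂.ncard = 1 := by omega
      obtain ⟨CM, hCM⟩ := Set.ncard_eq_one.mp h𝒟₁card
      obtain ⟨CJ, hCJ⟩ := Set.ncard_eq_one.mp h𝒟₂card
      have hCMeq : CM = M := by
        rw [hCM] at h𝒟₁un
        simpa [Set.sUnion_singleton] using h𝒟₁un
      have hCJeq : CJ = J := by
        rw [hCJ] at h𝒟₂un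
        simpa [Set.sUnion_singleton] using h𝒟₂un
      have hM𝔅 : M ∈ 𝔅 := hCMeq ▸ h𝒟₁sub (by rw [hCM]; exact rfl)
      have hJ𝔅 : J ∈ 𝔅 := hCJeq ▸ h𝒟₂sub (by rw [hCJ]; exact rfl)
      have hMJne' : M ≠ J := by
        rintro h
        obtain ⟨x, hx⟩ := hMne
        exact (hMJd.le_bot ⟨hx, h ▸ hx⟩ : x ∈ (∅ : Set E))
      have h𝒟eq : 𝒟₁ ∪ 𝒟₂ = {M, J} := by
        rw [hCM, hCJ, hCMeq, hCJeq]
        rfl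
      have h𝒟fineq : 𝒟fin = ({M, J} : Finset (Set E)) := by
        apply Finset.coe_injective
        rw [h𝒟coe, h𝒟eq]
        simp
      set σ' : Set E → Set V := fun C => if C = M then X₁ ∩ X₂ else if C = J then X₁ ∪ X₂ else σ C with hσ'def
      have hMem𝒟 : M ∈ 𝒟₁ ∪ 𝒟₂ := by rw [h𝒟eq]; exact Or.inl rfl
      have hJem𝒟 : J ∈ 𝒟₁ ∪ 𝒟₂ := by rw [h𝒟eq]; exact Or.inr rfl
      have hσ'P : ∀ B ∈ P, σ' B = σ B := by
        intro B hB
        have hBM : B ≠ M := (hPD B hB M hMem𝒟).2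
        have hBJ : B ≠ J := (hPD B hB J hJem𝒟).2
        simp [hσ'def, hBM, hBJ]
      have hσ'M : σ' M = X₁ ∩ X₂ := by simp [hσ'def]
      have hσ'J : σ' J = X₁ ∪ X₂ := by simp [hσ'def, hMJne'.symm]
      have hInv' : Inv ℬ' σ' := by
        refine ⟨hℬ'sub, hℬ'disj, hℬ'U, ?_⟩
        intro C hC
        rw [hℬ'def, Finset.mem_union] at hC
        rcases hC with hC | hC
        · rw [hσ'P C hC]; exact h4 C (hPmem C hC).1
        · have hCd : C ∈ 𝒟₁ ∪ 𝒟₂ := by rw [← h𝒟coe]; exact Finset.mem_coe.mpr hC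
          rw [h𝒟eq] at hCd
          rcases hCd with rfl | rfl
          · rw [hσ'M]; exact hMd
          · rw [hσ'J]; exact hJd
      refine ⟨ℬ', σ', hInv', ?_, ?_⟩
      · omega
      · have hsum' : ∑ B ∈ ℬ', (σ' B ∩ T).ncard ^ 2 =
            ∑ B ∈ P, (σ B ∩ T).ncard ^ 2 +
              (((X₁ ∩ X₂) ∩ T).ncard ^ 2 + ((X₁ ∪ X₂) ∩ T).ncard ^ 2) := by
          rw [hℬ'def, Finset.sum_union hPDfin, hsumP σ' hσ'P, h𝒟fineq,
            Finset.sum_pair hMJne', hσ'M, hσ'J]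
        have hTend' : ∀ e, e ∈ B₁ ∪ B₂ → D.tail e ∈ T ∧ D.head e ∈ T :=
          fun e he => hTend e (hBU he)
        have hTend'' : ∀ e, e ∈ B₂ ∪ B₁ → D.tail e ∈ T ∧ D.head e ∈ T :=
          fun e he => hTend' e (Set.union_comm B₂ B₁ ▸ he)
        have hab : ¬ (X₁ ∩ T) ⊆ (X₂ ∩ T) := fun h =>
          hn12 (MultiDigraph.trace_mono hD hd₁ hd₂ hB₂ne hTend' h)
        have hba : ¬ (X₂ ∩ T) ⊆ (X₁ ∩ T) := fun h =>
          hn21 (MultiDigraph.trace_mono hD hd₂ hd₁ hB₁ne hTend'' h)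
        have hsq := sq_uncross_ineq hT (Set.inter_subset_right (s := X₁)) (Set.inter_subset_right (s := X₂)) hab hba
        have hinter : (X₁ ∩ T) ∩ (X₂ ∩ T) = (X₁ ∩ X₂) ∩ T := by
          ext x; simp only [Set.mem_inter_iff]; tauto
        have hunion : (X₁ ∩ T) ∪ (X₂ ∩ T) = (X₁ ∪ X₂) ∩ T := by
          ext x; simp only [Set.mem_inter_iff, Set.mem_union]; tauto
        rw [hinter, hunion] at hsq
        simp only [hφdef]
        rw [hsumℬ, hsum', hcardℬ, hcardℬ', h𝒟card]
        omega
  -- downward induction on the potential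
  have aux : ∀ m : ℕ, ∀ ℬ σ, Inv ℬ σ → N ≤ m + φ ℬ σ →
      ∃ ℬ' : Finset (Set E), (↑ℬ' : Set (Set E)) ⊆ 𝔅 ∧
        (↑ℬ' : Set (Set E)).Pairwise Disjoint ∧
        (↑ℬ' : Set (Set E)).Pairwise D.NestedDicuts ∧ ℬ.card ≤ ℬ'.card := by
    intro m
    induction m with
    | zero =>
      intro ℬ σ hInv hN
      by_cases hnest : ∀ B₁ ∈ ℬ, ∀ B₂ ∈ ℬ, B₁ ≠ B₂ →
          (σ B₁ ⊆ σ B₂ ∨ σ B₂ ⊆ σ B₁ ∨ σ B₁ ⊆ (σ B₂)ᶜ ∨ (σ B₂)ᶜ ⊆ σ B₁)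
      · refine ⟨ℬ, hInv.1, hInv.2.1, ?_, le_refl _⟩
        intro A hA B hB hne'
        exact ⟨σ A, σ B, hInv.2.2.2 A (Finset.mem_coe.mp hA), hInv.2.2.2 B (Finset.mem_coe.mp hB),
          hnest A (Finset.mem_coe.mp hA) B (Finset.mem_coe.mp hB) hne'⟩
      · obtain ⟨ℬ', σ', hInv', _, hφ'⟩ := step ℬ σ hInv hnest
        have hb := hφbound ℬ' σ' hInv'
        omega
    | succ m ih =>
      intro ℬ σ hInv hN
      by_cases hnest : ∀ B₁ ∈ ℬ, ∀ B₂ ∈ ℬ, B₁ ≠ B₂ →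
          (σ B₁ ⊆ σ B₂ ∨ σ B₂ ⊆ σ B₁ ∨ σ B₁ ⊆ (σ B₂)ᶜ ∨ (σ B₂)ᶜ ⊆ σ B₁)
      · refine ⟨ℬ, hInv.1, hInv.2.1, ?_, le_refl _⟩
        intro A hA B hB hne'
        exact ⟨σ A, σ B, hInv.2.2.2 A (Finset.mem_coe.mp hA), hInv.2.2.2 B (Finset.mem_coe.mp hB),
          hnest A (Finset.mem_coe.mp hA) B (Finset.mem_coe.mp hB) hne'⟩
      · obtain ⟨ℬ', σ', hInv', hcard, hφ'⟩ := step ℬ σ hInv hnest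
        obtain ⟨ℬ'', hs'', hd'', hn'', hc''⟩ := ih ℬ' σ' hInv' (by omega)
        exact ⟨ℬ'', hs'', hd'', hn'', hcard.trans hc''⟩
  -- wrap up
  set ℬF : Finset (Set E) := hfin₀.toFinset with hℬFdef
  have hcoe : (↑ℬF : Set (Set E)) = ℬ₀ := hfin₀.coe_toFinset
  have hInv₀ : Inv ℬF shore := by
    refine ⟨by rw [hcoe]; exact hsub₀, by rw [hcoe]; exact hdisj₀, ?_, ?_⟩
    · intro B hB
      exact Set.subset_sUnion_of_mem (by rw [← hcoe]; exact Finset.mem_coe.mpr hB)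
    · intro B hB
      have hB𝔅 : B ∈ 𝔅 := hsub₀ (by rw [← hcoe]; exact Finset.mem_coe.mpr hB)
      exact shore_spec B (shoreEx B hB𝔅)
  obtain ⟨ℬ', hs, hd, hn, hc⟩ := aux N ℬF shore hInv₀ (by omega)
  refine ⟨(↑ℬ' : Set (Set E)), hs, ℬ'.finite_toSet, hd, hn, ?_⟩
  calc ℬ₀.ncard = ℬF.card := by rw [← hcoe, Set.ncard_coe_finset]
    _ ≤ ℬ'.card := hc
    _ = (↑ℬ' : Set (Set E)).ncard := (Set.ncard_coe_finset _).symm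

/-- Let `D` be a weakly connected digraph and `𝔅` a class of finite dibonds of
`D`. Then (i) the existence of a finite edge set meeting every dibond in `𝔅` is
equivalent to (ii) the maximal number of pairwise disjoint dibonds in `𝔅` being
finite; and if `𝔅` is finitely corner-closed, these are also equivalent to
(iii) the maximal number of pairwise disjoint and pairwise nested dibonds in
`𝔅` being finite. -/
theorem finite_Bdijoin_iff_bounded_disjoint_dibonds {V E : Type*}
    (D : MultiDigraph V E) (hD : D.WeaklyConnected)
    (𝔅 : Set (Set E)) (h𝔅 : ∀ B ∈ 𝔅, D.IsDibond B ∧ B.Finite) :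
    ((∃ F : Set E, F.Finite ∧ ∀ B ∈ 𝔅, (F ∩ B).Nonempty) ↔
      (∃ n : ℕ, ∀ ℬ : Set (Set E), ℬ ⊆ 𝔅 → ℬ.Pairwise Disjoint →
        ℬ.Finite ∧ ℬ.ncard ≤ n)) ∧
    (D.FinitelyCornerClosed 𝔅 →
      ((∃ F : Set E, F.Finite ∧ ∀ B ∈ 𝔅, (F ∩ B).Nonempty) ↔
        (∃ n : ℕ, ∀ ℬ : Set (Set E), ℬ ⊆ 𝔅 → ℬ.Pairwise Disjoint →
          ℬ.Pairwise D.NestedDicuts → ℬ.Finite ∧ ℬ.ncard ≤ n))) := by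
  classical
  have dir1 : (∃ F : Set E, F.Finite ∧ ∀ B ∈ 𝔅, (F ∩ B).Nonempty) →
      ∃ n : ℕ, ∀ ℬ : Set (Set E), ℬ ⊆ 𝔅 → ℬ.Pairwise Disjoint → ℬ.Finite ∧ ℬ.ncard ≤ n := by
    rintro ⟨F, hF, hmeets⟩
    exact ⟨F.ncard, fun ℬ hsub hdisj =>
      inj_choice_lemma hF (fun C hC => hmeets C (hsub hC)) hdisj⟩
  have dir2 : (∃ n : ℕ, ∀ ℬ : Set (Set E), ℬ ⊆ 𝔅 → ℬ.Pairwise Disjoint →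
      ℬ.Finite ∧ ℬ.ncard ≤ n) → ∃ F : Set E, F.Finite ∧ ∀ B ∈ 𝔅, (F ∩ B).Nonempty := by
    rintro ⟨n, hn⟩
    set Q : ℕ → Prop := fun m => ∃ ℬ : Set (Set E), ℬ ⊆ 𝔅 ∧ ℬ.Pairwise Disjoint ∧
      ℬ.Finite ∧ ℬ.ncard = m with hQdef
    have hQ0 : Q 0 := ⟨∅, by simp, by simp, by simp, by simp⟩
    have hspec : Q (Nat.findGreatest Q n) := Nat.findGreatest_spec (Nat.zero_le n) hQ0
    obtain ⟨ℬm, hsubm, hdisjm, hfinm, hcardm⟩ := hspec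
    refine ⟨⋃₀ ℬm, Set.Finite.sUnion hfinm (fun B hB => (h𝔅 B (hsubm hB)).2), ?_⟩
    intro B hB
    by_contra hno
    rw [Set.not_nonempty_iff_eq_empty] at hno
    have hBne : B.Nonempty := (h𝔅 B hB).1.2.1
    have hBnotin : B ∉ ℬm := by
      intro hmem
      obtain ⟨x, hx⟩ := hBne
      have hmm : x ∈ ⋃₀ ℬm ∩ B := ⟨⟨B, hmem, hx⟩, hx⟩
      rw [hno] at hmm; exact hmm
    have hdisjB : ∀ C ∈ ℬm, Disjoint B C := by
      intro C hC
      rw [Set.disjoint_left]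
      intro x hxB hxC
      have hmm : x ∈ ⋃₀ ℬm ∩ B := ⟨⟨C, hC, hxC⟩, hxB⟩
      rw [hno] at hmm; exact hmm
    have hQnew : Q (Nat.findGreatest Q n + 1) := by
      refine ⟨insert B ℬm, Set.insert_subset hB hsubm, ?_, hfinm.insert B, ?_⟩
      · refine Set.pairwise_insert_of_symm.mpr ⟨hdisjm, ?_⟩
        intro C hC _
        exact hdisjB C hC
      · rw [Set.ncard_insert_of_notMem hBnotin hfinm, hcardm]
    have hle : Nat.findGreatest Q n + 1 ≤ n := by
      obtain ⟨ℬ', h1, h2, h3, h4⟩ := hQnew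
      have := hn ℬ' h1 h2
      omega
    exact Nat.findGreatest_is_greatest (Nat.lt_succ_self _) hle hQnew
  constructor
  · exact ⟨dir1, dir2⟩
  · intro hCC
    constructor
    · rintro ⟨F, hF, hmeets⟩
      exact ⟨F.ncard, fun ℬ hsub hdisj _ =>
        inj_choice_lemma hF (fun C hC => hmeets C (hsub hC)) hdisj⟩
    · rintro ⟨n, hn⟩
      apply dir2
      refine ⟨n, ?_⟩
      intro ℬ hsub hdisj
      have key : ∀ ℬ₀ : Set (Set E), ℬ₀ ⊆ 𝔅 → ℬ₀.Finite → ℬ₀.Pairwise Disjoint →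
          ℬ₀.ncard ≠ n + 1 := by
        intro ℬ₀ hs hf hd hc
        obtain ⟨ℬ₁, h1sub, h1fin, h1disj, h1nest, hle⟩ :=
          MultiDigraph.uncross hD h𝔅 hCC hs hf hd
        have h2 := hn ℬ₁ h1sub h1disj h1nest
        omega
      have hfin : ℬ.Finite := by
        by_contra hinf
        obtain ⟨ℬ₀, hsub₀, hfin₀, hcard₀⟩ :=
          (Set.Infinite.exists_subset_ncard_eq hinf (n + 1))
        exact key ℬ₀ (hsub₀.trans hsub) hfin₀ (hdisj.mono hsub₀) hcard₀
      refine ⟨hfin, ?_⟩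
      by_contra hgt
      push_neg at hgt
      obtain ⟨ℬ₀, hsub₀, hcard₀⟩ := Set.exists_subset_card_eq (s := ℬ) (n := n + 1) (by omega)
      exact key ℬ₀ (hsub₀.trans hsub) (hfin.subset hsub₀) (hdisj.mono hsub₀) hcard₀
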